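/- Let m, n be integers with (m,n) ≠ (0,0), let F⁰ : ℝ → ℝ be twice continuously differentiable and nowhere zero, and let Fx : ℝ → ℝ be twice continuously differentiable, Fy, Fz : ℝ → ℝ continuously differentiable, G : ℝ → ℝ continuously differentiable, satisfying for all x: (i) Fx′ + m·Fy + n·Fz = 0; (ii) G′ = −n·F⁰·Fx; (iii) m·G = n·F⁰·Fy; (iv) n·G = n·F⁰·Fz + F⁰′·Fx. Then for all x, n·[ ( (F⁰(x))² · (Fx/F⁰)′(x) )′ − (m² + n²)·F⁰(x)·Fx(x) ] = 0. -/

import Mathlib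

/-- The first-order ideal MHD equilibrium equations (4.4a)–(4.4d) imply the second-order
ODE (4.7): `n·[((F⁰)²·(Fx/F⁰)′)′ − (m² + n²)·F⁰·Fx] = 0`. -/
theorem statement5 (m n : ℤ) (hmn : (m, n) ≠ (0, 0))
    (F0 : ℝ → ℝ) (hF0 : ContDiff ℝ 2 F0) (hF0ne : ∀ x : ℝ, F0 x ≠ 0)
    (Fx : ℝ → ℝ) (hFx : ContDiff ℝ 2 Fx)
    (Fy Fz G : ℝ → ℝ)
    (hFy : ContDiff ℝ 1 Fy) (hFz : ContDiff ℝ 1 Fz) (hG : ContDiff ℝ 1 G)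
    (h1 : ∀ x : ℝ, deriv Fx x + (m : ℝ) * Fy x + (n : ℝ) * Fz x = 0)
    (h2 : ∀ x : ℝ, deriv G x = -(n : ℝ) * F0 x * Fx x)
    (h3 : ∀ x : ℝ, (m : ℝ) * G x = (n : ℝ) * F0 x * Fy x)
    (h4 : ∀ x : ℝ, (n : ℝ) * G x = (n : ℝ) * F0 x * Fz x + deriv F0 x * Fx x) :
    ∀ x : ℝ, (n : ℝ) *
      (deriv (fun t => (F0 t) ^ 2 * deriv (fun s => Fx s / F0 s) t) x
        - ((m : ℝ) ^ 2 + (n : ℝ) ^ 2) * F0 x * Fx x) = 0 := by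
  intro x
  by_cases hn : (n : ℝ) = 0
  · rw [hn]; ring
  · have hFxd : Differentiable ℝ Fx := hFx.differentiable (by norm_num)
    have hF0d : Differentiable ℝ F0 := hF0.differentiable (by norm_num)
    have hGd : Differentiable ℝ G := hG.differentiable (by norm_num)
    have key : (fun t => (F0 t) ^ 2 * deriv (fun s => Fx s / F0 s) t)
        = fun t => (-(((m : ℝ) ^ 2 + (n : ℝ) ^ 2) / n)) * G t := by
      funext t
      have hd : deriv (fun s => Fx s / F0 s) t
          = (deriv Fx t * F0 t - Fx t * deriv F0 t) / (F0 t) ^ 2 :=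
        deriv_div (hFxd t) (hF0d t) (hF0ne t)
      rw [hd]
      have hne := hF0ne t
      field_simp
      linear_combination ((n : ℝ) * F0 t) * h1 t + (m : ℝ) * h3 t + (n : ℝ) * h4 t
    rw [key]
    rw [deriv_const_mul _ (hGd x), h2 x]
    field_simp
    ring
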